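/- Let H be a real Hilbert space, A : H → H bounded self-adjoint positive semidefinite, s a nonnegative integer, and e, ρ : [0,T] → H continuously differentiable satisfying A^{s+1} e'(t) + A^s e(t) = A^s ρ(t) for all t. Then for all t ∈ [0,T], the discrete seminorm |v| = ⟨A^s v, v⟩^{1/2} satisfies |e(t)|² ≤ |e(0)|² + 2·|ρ(t)|·|e(t)| + 2·|ρ(0)|·|e(0)| + 2·∫_0^t |ρ'(s)|·|e(s)| ds. -/

import Mathlib

open Real intervalIntegral

theorem negative_norm_energy_estimate
    {H : Type*} [NormedAddCommGroup H] [InnerProductSpace ℝ H] [CompleteSpace H]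
    (A : H →L[ℝ] H)
    (hsa : ∀ v w : H, (inner ℝ (A v) w : ℝ) = inner ℝ v (A w))
    (hpsd : ∀ v : H, 0 ≤ (inner ℝ (A v) v : ℝ))
    (s : ℕ) (T : ℝ) (hT : 0 ≤ T)
    (e ρ : ℝ → H) (he : ContDiff ℝ 1 e) (hρ : ContDiff ℝ 1 ρ)
    (heq : ∀ t : ℝ, (A ^ (s + 1)) (deriv e t) + (A ^ s) (e t) = (A ^ s) (ρ t)) :
    ∀ t ∈ Set.Icc (0:ℝ) T,
      Real.sqrt (inner ℝ ((A ^ s) (e t)) (e t) : ℝ) ^ 2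
        ≤ Real.sqrt (inner ℝ ((A ^ s) (e 0)) (e 0) : ℝ) ^ 2
          + 2 * Real.sqrt (inner ℝ ((A ^ s) (ρ t)) (ρ t) : ℝ)
              * Real.sqrt (inner ℝ ((A ^ s) (e t)) (e t) : ℝ)
          + 2 * Real.sqrt (inner ℝ ((A ^ s) (ρ 0)) (ρ 0) : ℝ)
              * Real.sqrt (inner ℝ ((A ^ s) (e 0)) (e 0) : ℝ)
          + 2 * ∫ τ in (0:ℝ)..t,
              Real.sqrt (inner ℝ ((A ^ s) (deriv ρ τ)) (deriv ρ τ) : ℝ)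
                * Real.sqrt (inner ℝ ((A ^ s) (e τ)) (e τ) : ℝ) := by
  -- A^n is self-adjoint
  have hsel : ∀ (n : ℕ) (v w : H), (inner ℝ ((A ^ n) v) w : ℝ) = inner ℝ v ((A ^ n) w) := by
    intro n
    induction n with
    | zero => intro v w; simp
    | succ k ih =>
      intro v w
      simp only [pow_succ, ContinuousLinearMap.mul_apply]
      rw [ih (A v) w, hsa]
      congr 1
      rw [← ContinuousLinearMap.mul_apply, ← ContinuousLinearMap.mul_apply, ← pow_succ',
        pow_succ]
  -- A^n is positive semidefinite
  have hpsdn : ∀ (n : ℕ) (v : H), 0 ≤ (inner ℝ ((A ^ n) v) v : ℝ) := by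
    intro n v
    rcases Nat.even_or_odd n with ⟨k, hk⟩ | ⟨k, hk⟩
    · subst hk
      have h1 : (A ^ (k + k)) v = (A ^ k) ((A ^ k) v) := by
        rw [pow_add]; rfl
      rw [h1, hsel k]
      exact real_inner_self_nonneg
    · have h2 : n = (k + 1) + k := by omega
      subst h2
      have h1 : (A ^ ((k + 1) + k)) v = (A ^ k) (A ((A ^ k) v)) := by
        rw [pow_add, pow_succ]; rfl
      rw [h1, hsel k]
      exact hpsd _
  set Q : H → ℝ := fun v => (inner ℝ ((A ^ s) v) v : ℝ) with hQdef
  have hQ : ∀ v, 0 ≤ Q v := fun v => hpsdn s v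
  -- Cauchy–Schwarz for the semidefinite form
  have cs : ∀ v w : H, |(inner ℝ ((A ^ s) v) w : ℝ)| ≤ Real.sqrt (Q v) * Real.sqrt (Q w) := by
    intro v w
    have hquad : ∀ x : ℝ, 0 ≤ Q w * (x * x) + (2 * (inner ℝ ((A ^ s) v) w : ℝ)) * x + Q v := by
      intro x
      have h0 := hpsdn s (v + x • w)
      have hsym : (inner ℝ ((A ^ s) w) v : ℝ) = inner ℝ ((A ^ s) v) w := by
        rw [hsel s w v, real_inner_comm]
      simp only [map_add, map_smul, inner_add_left, inner_add_right, inner_smul_left,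
        inner_smul_right, starRingEnd_apply, star_trivial] at h0
      rw [hsym] at h0
      simp only [hQdef]
      nlinarith [h0]
    have hd := discrim_le_zero hquad
    rw [discrim] at hd
    have hsq : (inner ℝ ((A ^ s) v) w : ℝ) ^ 2 ≤ Q v * Q w := by nlinarith
    calc |(inner ℝ ((A ^ s) v) w : ℝ)| = Real.sqrt ((inner ℝ ((A ^ s) v) w : ℝ) ^ 2) := by
          rw [Real.sqrt_sq_eq_abs]
      _ ≤ Real.sqrt (Q v * Q w) := Real.sqrt_le_sqrt hsq
      _ = Real.sqrt (Q v) * Real.sqrt (Q w) := Real.sqrt_mul (hQ v) _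
  -- differentiability facts
  have hde : ∀ t, HasDerivAt e (deriv e t) t := fun t =>
    (he.differentiable one_ne_zero t).hasDerivAt
  have hdρ : ∀ t, HasDerivAt ρ (deriv ρ t) t := fun t =>
    (hρ.differentiable one_ne_zero t).hasDerivAt
  have hce : Continuous e := he.continuous
  have hcρ : Continuous ρ := hρ.continuous
  have hce' : Continuous (deriv e) := he.continuous_deriv le_rfl
  have hcρ' : Continuous (deriv ρ) := hρ.continuous_deriv le_rfl
  intro t ht
  have ht0 : (0:ℝ) ≤ t := ht.1
  -- derivative functions
  set D : ℝ → ℝ := fun τ =>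
    (inner ℝ ((A ^ s) (e τ)) (deriv e τ) : ℝ) + (inner ℝ ((A ^ s) (deriv e τ)) (e τ) : ℝ) with hDdef
  set G' : ℝ → ℝ := fun τ =>
    (inner ℝ ((A ^ s) (ρ τ)) (deriv e τ) : ℝ) + (inner ℝ ((A ^ s) (deriv ρ τ)) (e τ) : ℝ) with hG'def
  set R : ℝ → ℝ := fun τ =>
    Real.sqrt (Q (deriv ρ τ)) * Real.sqrt (Q (e τ)) with hRdef
  have hAe : ∀ τ, HasDerivAt (fun x => (A ^ s) (e x)) ((A ^ s) (deriv e τ)) τ := fun τ =>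
    ((A ^ s).hasFDerivAt.comp_hasDerivAt τ (hde τ))
  have hAρ : ∀ τ, HasDerivAt (fun x => (A ^ s) (ρ x)) ((A ^ s) (deriv ρ τ)) τ := fun τ =>
    ((A ^ s).hasFDerivAt.comp_hasDerivAt τ (hdρ τ))
  have hFd : ∀ τ, HasDerivAt (fun x => Q (e x)) (D τ) τ := fun τ =>
    (hAe τ).inner ℝ (hde τ)
  have hGd : ∀ τ, HasDerivAt (fun x => (inner ℝ ((A ^ s) (ρ x)) (e x) : ℝ)) (G' τ) τ := fun τ =>
    (hAρ τ).inner ℝ (hde τ)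
  -- continuity of the derivative functions
  have hcAe : Continuous fun τ => (A ^ s) (e τ) := (A ^ s).continuous.comp hce
  have hcAρ : Continuous fun τ => (A ^ s) (ρ τ) := (A ^ s).continuous.comp hcρ
  have hcAe' : Continuous fun τ => (A ^ s) (deriv e τ) := (A ^ s).continuous.comp hce'
  have hcAρ' : Continuous fun τ => (A ^ s) (deriv ρ τ) := (A ^ s).continuous.comp hcρ'
  have hcD : Continuous D := (hcAe.inner hce').add (hcAe'.inner hce)
  have hcG' : Continuous G' := (hcAρ.inner hce').add (hcAρ'.inner hce)
  have hcR : Continuous R :=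
    ((hcAρ'.inner hcρ').sqrt).mul ((hcAe.inner hce).sqrt)
  -- fundamental theorem of calculus
  have hF : ∫ τ in (0:ℝ)..t, D τ = Q (e t) - Q (e 0) :=
    intervalIntegral.integral_eq_sub_of_hasDerivAt (fun τ _ => hFd τ)
      (hcD.intervalIntegrable 0 t)
  have hG : ∫ τ in (0:ℝ)..t, G' τ
      = (inner ℝ ((A ^ s) (ρ t)) (e t) : ℝ) - (inner ℝ ((A ^ s) (ρ 0)) (e 0) : ℝ) :=
    intervalIntegral.integral_eq_sub_of_hasDerivAt (fun τ _ => hGd τ)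
      (hcG'.intervalIntegrable 0 t)
  -- pointwise bound on D
  have hDle : ∀ τ, D τ ≤ 2 * G' τ + 2 * R τ := by
    intro τ
    have hsym : (inner ℝ ((A ^ s) (deriv e τ)) (e τ) : ℝ)
        = (inner ℝ ((A ^ s) (e τ)) (deriv e τ) : ℝ) := by
      rw [hsel s, real_inner_comm]
    have hAeq : (A ^ s) (e τ) = (A ^ s) (ρ τ) - (A ^ (s + 1)) (deriv e τ) :=
      eq_sub_of_add_eq' (heq τ)
    have h1 : (inner ℝ ((A ^ s) (e τ)) (deriv e τ) : ℝ)
        ≤ (inner ℝ ((A ^ s) (ρ τ)) (deriv e τ) : ℝ) := by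
      rw [hAeq, inner_sub_left]
      have := hpsdn (s + 1) (deriv e τ)
      linarith
    have h2 : -(inner ℝ ((A ^ s) (deriv ρ τ)) (e τ) : ℝ) ≤ R τ := by
      have := cs (deriv ρ τ) (e τ)
      have h3 := neg_le_abs (inner ℝ ((A ^ s) (deriv ρ τ)) (e τ) : ℝ)
      simp only [hRdef]
      linarith
    simp only [hDdef, hG'def, hRdef] at hsym h1 h2 ⊢
    linarith
  -- integrate the bound
  have hint : ∫ τ in (0:ℝ)..t, D τ ≤ ∫ τ in (0:ℝ)..t, (2 * G' τ + 2 * R τ) := by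
    apply intervalIntegral.integral_mono_on ht0 (hcD.intervalIntegrable 0 t)
      (((continuous_const.mul hcG').add (continuous_const.mul hcR)).intervalIntegrable 0 t)
    exact fun τ _ => hDle τ
  have hsplit : ∫ τ in (0:ℝ)..t, (2 * G' τ + 2 * R τ)
      = 2 * (∫ τ in (0:ℝ)..t, G' τ) + 2 * ∫ τ in (0:ℝ)..t, R τ := by
    rw [intervalIntegral.integral_add (f := fun τ => 2 * G' τ) (g := fun τ => 2 * R τ) ((continuous_const.mul hcG' : Continuous fun τ => 2 * G' τ).intervalIntegrable 0 t)
      ((continuous_const.mul hcR : Continuous fun τ => 2 * R τ).intervalIntegrable 0 t),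
      intervalIntegral.integral_const_mul, intervalIntegral.integral_const_mul]
  -- Cauchy–Schwarz on boundary terms
  have hcs_t : (inner ℝ ((A ^ s) (ρ t)) (e t) : ℝ) ≤ Real.sqrt (Q (ρ t)) * Real.sqrt (Q (e t)) :=
    (le_abs_self _).trans (cs _ _)
  have hcs_0 : -(inner ℝ ((A ^ s) (ρ 0)) (e 0) : ℝ) ≤ Real.sqrt (Q (ρ 0)) * Real.sqrt (Q (e 0)) :=
    (neg_le_abs _).trans (cs _ _)
  -- conclude
  have key : Q (e t) ≤ Q (e 0) + 2 * (Real.sqrt (Q (ρ t)) * Real.sqrt (Q (e t)))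
      + 2 * (Real.sqrt (Q (ρ 0)) * Real.sqrt (Q (e 0))) + 2 * ∫ τ in (0:ℝ)..t, R τ := by
    rw [hF, hsplit, hG] at hint
    nlinarith [hint, hcs_t, hcs_0]
  have hgoal1 : Real.sqrt (inner ℝ ((A ^ s) (e t)) (e t) : ℝ) ^ 2 = Q (e t) :=
    Real.sq_sqrt (hQ (e t))
  have hgoal2 : Real.sqrt (inner ℝ ((A ^ s) (e 0)) (e 0) : ℝ) ^ 2 = Q (e 0) :=
    Real.sq_sqrt (hQ (e 0))
  rw [hgoal1, hgoal2]
  calc Q (e t) ≤ Q (e 0) + 2 * (Real.sqrt (Q (ρ t)) * Real.sqrt (Q (e t)))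
      + 2 * (Real.sqrt (Q (ρ 0)) * Real.sqrt (Q (e 0))) + 2 * ∫ τ in (0:ℝ)..t, R τ := key
    _ = _ := by simp only [hQdef, hRdef]; ring
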